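/- Let D = diag(d₁,…,dₙ) with dᵢ > 0, α, β, λ > 0 with β > α·d_max². Then 0 is a global minimizer of F(z) = (1/2)‖z−x‖₂² + α·MCP(‖Dz‖₂; β, λ) if and only if ‖Dx‖₂ ≤ βλ and ‖D⁻¹x‖₂ ≤ αλ. -/

import Mathlib

/-- The Minimax Concave Penalty. -/
noncomputable def MCP (β lam t : ℝ) : ℝ :=
  if |t| ≤ β * lam then lam * |t| - t^2 / (2*β) else β * lam^2 / 2

set_option maxHeartbeats 2000000 in
/-- `0` is a global minimizer of `F(z) = (1/2)‖z−x‖₂² + α·MCP(‖Dz‖₂; β, λ)` if and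
only if `‖Dx‖₂ ≤ βλ` and `‖D⁻¹x‖₂ ≤ αλ`, assuming `β > α·d_max²`. -/
theorem stmt_9 (n : ℕ) (d x : Fin n → ℝ) (hd : ∀ i, 0 < d i) (α β lam : ℝ)
    (hα : 0 < α) (hβ : 1 < β) (hlam : 0 < lam)
    (hβd : ∀ i, α * (d i)^2 < β) :
    (∀ z : Fin n → ℝ,
        (1/2) * (∑ i, (x i)^2) + α * MCP β lam 0 ≤
        (1/2) * (∑ i, (z i - x i)^2) + α * MCP β lam (Real.sqrt (∑ i, (d i * z i)^2))) ↔
      (Real.sqrt (∑ i, (d i * x i)^2) ≤ β * lam ∧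
       Real.sqrt (∑ i, (x i / d i)^2) ≤ α * lam) := by
  have hβ0 : (0:ℝ) < β := lt_trans one_pos hβ
  have hβlam : (0:ℝ) < β * lam := mul_pos hβ0 hlam
  have hMCP0 : MCP β lam 0 = 0 := by
    simp [MCP, abs_zero, hβlam.le]
  set u := Real.sqrt (∑ i, (x i / d i)^2) with hu_def
  have hU2 : u^2 = ∑ i, (x i / d i)^2 := Real.sq_sqrt (by positivity)
  have hu0 : 0 ≤ u := Real.sqrt_nonneg _
  constructor
  · intro h
    constructor
    · -- ‖Dx‖ ≤ βλ
      by_contra htx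
      push_neg at htx
      set t := Real.sqrt (∑ i, (d i * x i)^2) with ht_def
      have hT2 : t^2 = ∑ i, (d i * x i)^2 := Real.sq_sqrt (by positivity)
      have hαT : α * t^2 ≤ β * ∑ i, (x i)^2 := by
        rw [hT2, Finset.mul_sum, Finset.mul_sum]
        apply Finset.sum_le_sum
        intro i _
        nlinarith [(hβd i).le, sq_nonneg (x i)]
      have hx := h x
      have hMCPt : MCP β lam t = β * lam^2 / 2 := by
        rw [MCP, if_neg]
        rw [abs_of_nonneg (Real.sqrt_nonneg _)]
        push_neg
        exact htx
      rw [hMCP0, hMCPt] at hx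
      simp only [sub_self] at hx
      have hsum0 : ∑ _i : Fin n, (0:ℝ)^2 = 0 := by simp
      rw [hsum0] at hx
      nlinarith [mul_pos (sub_pos.2 htx) (by positivity : (0:ℝ) < t + β*lam)]
    · -- ‖D⁻¹x‖ ≤ αλ
      by_contra hC
      push_neg at hC
      have hu0' : 0 < u := lt_trans (by positivity) hC
      set W := ∑ i, (x i / (d i)^2)^2 with hWdef
      have hW0 : (0:ℝ) ≤ W := by positivity
      have hβW : α * u^2 ≤ β * W := by
        rw [hU2, Finset.mul_sum, Finset.mul_sum]
        apply Finset.sum_le_sum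
        intro i _
        have hdi := (hd i).ne'
        have hkey : (x i / d i)^2 = (d i)^2 * (x i / (d i)^2)^2 := by
          field_simp
        rw [hkey]
        nlinarith [(hβd i).le, sq_nonneg (x i / (d i)^2)]
      have hE : (0:ℝ) < u^2 - α*lam*u := by nlinarith
      set E := u^2 - α*lam*u with hEdef
      set A' := β*W - α*u^2 with hAdef
      have hA'0 : (0:ℝ) ≤ A' := by rw [hAdef]; linarith
      set s := min (β*lam/u) (β*E/(A'+1)) with hsdef
      have hs0 : 0 < s := by
        apply lt_min
        · positivity
        · positivity
      have hsu : s * u ≤ β * lam := by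
        have h' := min_le_left (β*lam/u) (β*E/(A'+1))
        calc s * u ≤ (β*lam/u) * u := by
              apply mul_le_mul_of_nonneg_right _ hu0
              exact h'
          _ = β*lam := by field_simp
      have hsle : s * (A'+1) ≤ β*E := by
        have h' := min_le_right (β*lam/u) (β*E/(A'+1))
        have hA1 : (0:ℝ) < A' + 1 := by linarith
        calc s*(A'+1) ≤ (β*E/(A'+1))*(A'+1) := by
              apply mul_le_mul_of_nonneg_right _ hA1.le
              exact h'
          _ = β*E := by field_simp
      clear_value s A' E W u
      have hz := h (fun i => s * (x i / (d i)^2))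
      have hsum1 : ∑ i, (d i * (s * (x i / (d i)^2)))^2 = (s*u)^2 := by
        rw [mul_pow, hU2, Finset.mul_sum]
        apply Finset.sum_congr rfl
        intro i _
        have hdi := (hd i).ne'
        field_simp
      rw [hsum1, Real.sqrt_sq (by positivity)] at hz
      have hMCPsu : MCP β lam (s*u) = lam*(s*u) - (s*u)^2/(2*β) := by
        rw [MCP, if_pos]
        · rw [abs_of_nonneg (by positivity)]
        · rw [abs_of_nonneg (by positivity)]
          exact hsu
      rw [hMCP0, hMCPsu] at hz
      have hsum2 : ∑ i, (s * (x i / (d i)^2) - x i)^2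
          = s^2*W - 2*s*u^2 + ∑ i, (x i)^2 := by
        rw [hWdef, hU2, Finset.mul_sum, Finset.mul_sum]
        rw [← Finset.sum_sub_distrib, ← Finset.sum_add_distrib]
        apply Finset.sum_congr rfl
        intro i _
        have hdi := (hd i).ne'
        field_simp
        ring
      rw [hsum2] at hz
      have key : (0:ℝ) ≤ s^2*A' - 2*s*β*E := by
        have h2 : (0:ℝ) ≤ s^2*W/2 - s*u^2 + α*lam*(s*u) - α*((s*u)^2/(2*β)) := by
          nlinarith [hz, sq_nonneg (s*u)]
        have h3 := mul_nonneg hβ0.le h2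
        have h4 : β * (s^2*W/2 - s*u^2 + α*lam*(s*u) - α*((s*u)^2/(2*β)))
            = (s^2*(β*W - α*u^2) - 2*s*β*(u^2 - α*lam*u))/2 := by
          field_simp
          ring
        rw [h4] at h3
        rw [hAdef, hEdef]
        linarith
      have hge : 2*β*E ≤ s*A' := by nlinarith [key, hs0, mul_pos hs0 hs0]
      nlinarith [hsle, hge, mul_pos hβ0 hE, hs0]
  · rintro ⟨h1, h2⟩ z
    rw [hMCP0]
    set S := ∑ i, (z i)^2 with hSdef
    set T2 := ∑ i, (d i * z i)^2 with hT2def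
    set t := Real.sqrt T2 with htdef
    have ht0 : 0 ≤ t := Real.sqrt_nonneg _
    have hT2' : t^2 = T2 := Real.sq_sqrt (by rw [hT2def]; positivity)
    clear_value t T2 S
    have hαT : α * t^2 ≤ β * S := by
      rw [hT2', hT2def, hSdef, Finset.mul_sum, Finset.mul_sum]
      apply Finset.sum_le_sum
      intro i _
      nlinarith [(hβd i).le, sq_nonneg (z i)]
    have hP : ∑ i, x i * z i ≤ u * t := by
      have hP1 : ∑ i, x i * z i = ∑ i, (x i / d i) * (d i * z i) := by
        apply Finset.sum_congr rfl
        intro i _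
        have hdi := (hd i).ne'
        field_simp
      rw [hP1, htdef, hT2def, hu_def]
      exact Real.sum_mul_le_sqrt_mul_sqrt _ _ _
    have hut : u * t ≤ α * lam * t := mul_le_mul_of_nonneg_right h2 ht0
    have hexp : ∑ i, (z i - x i)^2 = S - 2*(∑ i, x i * z i) + ∑ i, (x i)^2 := by
      rw [hSdef, Finset.mul_sum, ← Finset.sum_sub_distrib, ← Finset.sum_add_distrib]
      apply Finset.sum_congr rfl
      intro i _
      ring
    rw [hexp, MCP, abs_of_nonneg ht0]
    split_ifs with hc
    · have hdiv : α*t^2/(2*β) ≤ S/2 := by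
        rw [div_le_div_iff₀ (by positivity) two_pos]
        nlinarith
      have hrw : α*(lam*t - t^2/(2*β)) = α*lam*t - α*t^2/(2*β) := by ring
      rw [hrw]
      linarith [hP, hut, hdiv]
    · push_neg at hc
      have hq : (0:ℝ) ≤ β*S - 2*β*(α*lam*t) + α*β^2*lam^2 := by
        nlinarith [sq_nonneg (t - β*lam), hα.le]
      have heq : S/2 - α*lam*t + α*β*lam^2/2
          = (β*S - 2*β*(α*lam*t) + α*β^2*lam^2)/(2*β) := by
        field_simp
      have hnn := div_nonneg hq (by positivity : (0:ℝ) ≤ 2*β)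
      rw [← heq] at hnn
      have hrw : α*(β*lam^2/2) = α*β*lam^2/2 := by ring
      rw [hrw]
      linarith [hP, hut, hnn]
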